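/- arXiv:1411.5192 — 8 statements merged into one kernel-verified Lean document; each statement's English description precedes it below -/
import Mathlib

section
/- Let p, q > 1 be real numbers and set m := min{p-1, q-1}. Then for every t > 0 one has g(p,q;t) ≥ (m/(p-1))·(1 + t^(q-p))^(1/(p-1)) > m/(p-1). -/
open Real

/-- `g p q t = ((p-1)·t^(p-2) + (q-1)·t^(q-2)) / ((p-1)·(t^(p-1)+t^(q-1))^((p-2)/(p-1)))`. -/
noncomputable def g (p q t : ℝ) : ℝ :=
  ((p - 1) * t ^ (p - 2) + (q - 1) * t ^ (q - 2)) /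
    ((p - 1) * (t ^ (p - 1) + t ^ (q - 1)) ^ ((p - 2) / (p - 1)))

/-- For `p, q > 1`, `m := min (p-1) (q-1)`, and every `t > 0`,
`g p q t ≥ (m/(p-1))·(1 + t^(q-p))^(1/(p-1)) > m/(p-1)`. -/
theorem stmt1 (p q : ℝ) (hp : 1 < p) (hq : 1 < q) (t : ℝ) (ht : 0 < t) :
    min (p - 1) (q - 1) / (p - 1) * (1 + t ^ (q - p)) ^ (1 / (p - 1)) ≤ g p q t ∧
      min (p - 1) (q - 1) / (p - 1) <
        min (p - 1) (q - 1) / (p - 1) * (1 + t ^ (q - p)) ^ (1 / (p - 1)) := by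
  have hp1 : (0:ℝ) < p - 1 := by linarith
  have hq1 : (0:ℝ) < q - 1 := by linarith
  have hm : 0 < min (p - 1) (q - 1) := lt_min hp1 hq1
  have hs : (0:ℝ) < t ^ (q - p) := rpow_pos_of_pos ht _
  have hA : (0:ℝ) < 1 + t ^ (q - p) := by linarith
  have hAr : (0:ℝ) < (1 + t ^ (q - p)) ^ ((p-2)/(p-1)) := rpow_pos_of_pos hA _
  have htp2 : (0:ℝ) < t ^ (p - 2) := rpow_pos_of_pos ht _
  have hkey1 : t ^ (q - 1) = t ^ (p - 1) * t ^ (q - p) := by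
    rw [← rpow_add ht]; ring_nf
  have hkey2 : t ^ (q - 2) = t ^ (p - 2) * t ^ (q - p) := by
    rw [← rpow_add ht]; ring_nf
  have hden : (t ^ (p - 1) + t ^ (q - 1)) ^ ((p - 2) / (p - 1)) =
      t ^ (p - 2) * (1 + t ^ (q - p)) ^ ((p - 2) / (p - 1)) := by
    have : t ^ (p - 1) + t ^ (q - 1) = t ^ (p - 1) * (1 + t ^ (q - p)) := by
      rw [hkey1]; ring
    rw [this, mul_rpow (rpow_pos_of_pos ht _).le hA.le, ← rpow_mul ht.le]
    congr 2
    field_simp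
  constructor
  · rw [g, hden]
    rw [le_div_iff₀ (by positivity)]
    have hAexp : (1 + t ^ (q - p)) ^ (1 / (p - 1)) *
        (1 + t ^ (q - p)) ^ ((p - 2) / (p - 1)) = 1 + t ^ (q - p) := by
      rw [← rpow_add hA]
      have : 1 / (p - 1) + (p - 2) / (p - 1) = 1 := by field_simp; ring
      rw [this, rpow_one]
    calc min (p - 1) (q - 1) / (p - 1) * (1 + t ^ (q - p)) ^ (1 / (p - 1)) *
          ((p - 1) * (t ^ (p - 2) * (1 + t ^ (q - p)) ^ ((p - 2) / (p - 1))))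
        = min (p - 1) (q - 1) * t ^ (p - 2) *
            ((1 + t ^ (q - p)) ^ (1 / (p - 1)) *
              (1 + t ^ (q - p)) ^ ((p - 2) / (p - 1))) := by
          field_simp
      _ = min (p - 1) (q - 1) * t ^ (p - 2) + min (p - 1) (q - 1) * t ^ (q - 2) := by
          rw [hAexp, hkey2]; ring
      _ ≤ (p - 1) * t ^ (p - 2) + (q - 1) * t ^ (q - 2) := by
          have h1 : min (p - 1) (q - 1) ≤ p - 1 := min_le_left _ _
          have h2 : min (p - 1) (q - 1) ≤ q - 1 := min_le_right _ _
          have htq2 : (0:ℝ) < t ^ (q - 2) := rpow_pos_of_pos ht _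
          nlinarith
  · have h1 : 1 < (1 + t ^ (q - p)) ^ (1 / (p - 1)) :=
      one_lt_rpow_iff_of_pos hA |>.mpr (Or.inl ⟨by linarith, by positivity⟩)
    calc min (p - 1) (q - 1) / (p - 1)
        = min (p - 1) (q - 1) / (p - 1) * 1 := by ring
      _ < _ := by
          apply mul_lt_mul_of_pos_left h1 (by positivity)
end

section
/- Let 1 < q < p be real numbers. Then there exists ρ > 0 (depending only on p and q) such that for every open set Ω ⊆ ℝ^N, every pair of functions u, φ : ℝ^N → ℝ differentiable at every point of Ω with u > 0 and φ ≥ 0 on Ω, and every x ∈ Ω, one has (|∇u(x)|^(p-2) + |∇u(x)|^(q-2)) · ⟨∇u(x), ∇(φ^p/(u^(p-1) + u^(q-1)))(x)⟩ ≤ (|∇φ(x)|^p + |∇(φ^(p/q))(x)|^q)/ρ. -/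
set_option maxHeartbeats 1000000
open Real

lemma young_lite {r ε x y : ℝ} (hr : 1 < r) (hε : 0 < ε) (hx : 0 ≤ x) (hy : 0 ≤ y) :
    y * x ^ (r - 1) ≤ ε * x ^ r + ε ^ (1 - r) * y ^ r := by
  have hεr : (0:ℝ) < ε ^ (1 - r) := Real.rpow_pos_of_pos hε _
  rcases le_or_gt x (y / ε) with h | h
  · have h1 : x ^ (r - 1) ≤ (y / ε) ^ (r - 1) :=
      Real.rpow_le_rpow hx h (by linarith)
    have h2 : y * (y / ε) ^ (r - 1) = ε ^ (1 - r) * y ^ r := by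
      rw [Real.div_rpow hy hε.le]
      rw [show (1:ℝ) - r = -(r-1) by ring, Real.rpow_neg hε.le]
      rw [show r = 1 + (r - 1) by ring, Real.rpow_add' hy (by intro hc; linarith), Real.rpow_one]
      ring
    have h3 : y * x ^ (r - 1) ≤ ε ^ (1 - r) * y ^ r := by
      calc y * x ^ (r-1) ≤ y * (y/ε) ^ (r-1) := by
            apply mul_le_mul_of_nonneg_left h1 hy
        _ = ε ^ (1 - r) * y ^ r := h2
    have h4 : 0 ≤ ε * x ^ r := by positivity
    linarith
  · have hxpos : 0 < x := lt_of_le_of_lt (by positivity) h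
    have hyx : y < ε * x := by
      rw [div_lt_iff₀ hε] at h; linarith [h]
    have h1 : y * x ^ (r-1) ≤ (ε * x) * x ^ (r-1) := by
      apply mul_le_mul_of_nonneg_right hyx.le (by positivity)
    have h2 : (ε * x) * x ^ (r-1) = ε * x ^ r := by
      rw [show r = 1 + (r-1) by ring, Real.rpow_add hxpos, Real.rpow_one]; ring
    have h4 : 0 ≤ ε ^ (1 - r) * y ^ r := by positivity
    linarith

lemma picone_key (p q : ℝ) (hq : 1 < q) (hqp : q < p) :
    ∃ C : ℝ, 0 < C ∧ ∀ A B t s IP : ℝ, 0 ≤ A → 0 ≤ B → 0 ≤ t → 0 < s → IP ≤ B * A →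
      (A ^ (p-2) + A ^ (q-2)) *
        (t ^ p * (-(((s^(p-1) + s^(q-1))^2)⁻¹) * (((p-1)*s^(p-2) + (q-1)*s^(q-2)) * (A*A)))
          + (s^(p-1) + s^(q-1))⁻¹ * (p * t^(p-1) * IP))
      ≤ (B ^ p + t ^ (p-q) * B ^ q) * C := by
  have hp : 1 < p := hq.trans hqp
  have hq1 : (0:ℝ) < q - 1 := by linarith
  refine ⟨(q-1) ^ (1-p) * p ^ p + (q-1) ^ (1-q) * p ^ q, by positivity, ?_⟩
  intro A B t s IP hA hB ht hs hIP
  have hRHS : (0:ℝ) ≤ (B ^ p + t ^ (p-q) * B ^ q) * ((q-1) ^ (1-p) * p ^ p + (q-1) ^ (1-q) * p ^ q) := by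
    positivity
  -- abbreviations
  set D : ℝ := s^(p-1) + s^(q-1) with hD
  have hDpos : 0 < D := by positivity
  have hApow : (0:ℝ) ≤ A ^ (p-2) + A ^ (q-2) := by positivity
  -- trivial case t = 0
  rcases eq_or_lt_of_le ht with ht0 | htpos
  · rw [← ht0]
    rw [Real.zero_rpow (by linarith : p ≠ 0), Real.zero_rpow (by intro hc; linarith : p - 1 ≠ 0)]
    simp only [zero_mul, mul_zero, neg_zero, add_zero, zero_add]
    positivity
  -- trivial case A = 0
  rcases eq_or_lt_of_le hA with hA0 | hApos
  · rw [← hA0]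
    rw [← hA0] at hIP
    have hIP0 : IP ≤ 0 := by simpa using hIP
    have : (0:ℝ)^(p-2) + (0:ℝ)^(q-2) ≥ 0 := by positivity
    refine le_trans ?_ hRHS
    apply mul_nonpos_of_nonneg_of_nonpos this
    have h1 : t ^ p * (-((D^2)⁻¹) * (((p-1)*s^(p-2) + (q-1)*s^(q-2)) * ((0:ℝ)*0))) = 0 := by
      ring
    rw [h1, zero_add]
    apply mul_nonpos_of_nonneg_of_nonpos (by positivity)
    have : 0 ≤ p * t^(p-1) := by positivity
    nlinarith [Real.rpow_pos_of_pos htpos (p-1)]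
  -- main case
  set F : ℝ := s^(p-2) + s^(q-2) with hF
  have hFpos : 0 < F := by positivity
  set G : ℝ := A / s with hG
  have hGpos : 0 < G := by positivity
  set E : ℝ := (p-1)*s^(p-2) + (q-1)*s^(q-2) with hE
  -- step 1: rewrite LHS as a single fraction and bound by the clean expression
  have step1 : (A ^ (p-2) + A ^ (q-2)) *
        (t ^ p * (-((D^2)⁻¹) * (E * (A*A))) + D⁻¹ * (p * t^(p-1) * IP))
      ≤ (A ^ (p-2) + A ^ (q-2)) *
        ((p * t^(p-1) * (B*A) * D - (q-1) * t^p * F * (A*A)) / D^2) := by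
    have heq : (t ^ p * (-((D^2)⁻¹) * (E * (A*A))) + D⁻¹ * (p * t^(p-1) * IP))
        = (p * t^(p-1) * IP * D - t^p * E * (A*A)) / D^2 := by
      field_simp; ring
    rw [heq]
    apply mul_le_mul_of_nonneg_left _ hApow
    apply div_le_div_of_nonneg_right _ (by positivity)
    have h1 : p * t^(p-1) * IP * D ≤ p * t^(p-1) * (B*A) * D := by
      have h0 : 0 ≤ p * t^(p-1) := by positivity
      nlinarith [mul_nonneg (mul_nonneg h0 hDpos.le) (sub_nonneg.mpr hIP)]
    have h2 : (q-1) * t^p * F * (A*A) ≤ t^p * E * (A*A) := by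
      have htp : 0 ≤ t^p := by positivity
      have hsp : 0 ≤ s^(p-2) := by positivity
      have hEF : (q-1)*F ≤ E := by
        rw [hF, hE]
        have hpq : 0 ≤ (p - q) * s^(p-2) := mul_nonneg (by linarith) hsp
        ring_nf
        ring_nf at hpq
        linarith
      have hmul : 0 ≤ t^p * (A*A) := mul_nonneg htp (mul_nonneg hA hA)
      have h2' := mul_le_mul_of_nonneg_left hEF hmul
      ring_nf at h2' ⊢
      linarith
    linarith
  -- power decompositions
  have hsp2 : (0:ℝ) < s^(p-2) := Real.rpow_pos_of_pos hs _
  have hsq2 : (0:ℝ) < s^(q-2) := Real.rpow_pos_of_pos hs _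
  have hsp1 : s^(p-1) = s * s^(p-2) := by
    rw [show p-1 = 1+(p-2) by ring, Real.rpow_add hs, Real.rpow_one]
  have hsq1 : s^(q-1) = s * s^(q-2) := by
    rw [show q-1 = 1+(q-2) by ring, Real.rpow_add hs, Real.rpow_one]
  have hGp1 : G^(p-1) = (A^(p-2) * A) / (s * s^(p-2)) := by
    rw [hG, Real.div_rpow hA hs.le, ← hsp1,
      show p-1 = (p-2)+1 by ring, Real.rpow_add hApos, Real.rpow_one,
      Real.rpow_add hs, Real.rpow_one]
  have hGq1 : G^(q-1) = (A^(q-2) * A) / (s * s^(q-2)) := by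
    rw [hG, Real.div_rpow hA hs.le, ← hsq1,
      show q-1 = (q-2)+1 by ring, Real.rpow_add hApos, Real.rpow_one,
      Real.rpow_add hs, Real.rpow_one]
  have hGp : G^p = (A^(p-2) * A * A) / (s * s^(p-2) * s) := by
    rw [hG, Real.div_rpow hA hs.le,
      show p = (p-2)+1+1 by ring, Real.rpow_add hApos, Real.rpow_add hApos, Real.rpow_one,
      Real.rpow_add hs, Real.rpow_add hs, Real.rpow_one]
    ring
  have hGq : G^q = (A^(q-2) * A * A) / (s * s^(q-2) * s) := by
    rw [hG, Real.div_rpow hA hs.le,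
      show q = (q-2)+1+1 by ring, Real.rpow_add hApos, Real.rpow_add hApos, Real.rpow_one,
      Real.rpow_add hs, Real.rpow_add hs, Real.rpow_one]
    ring
  -- the θ-decomposition identity
  have step2 : (A ^ (p-2) + A ^ (q-2)) *
        ((p * t^(p-1) * (B*A) * D - (q-1) * t^p * F * (A*A)) / D^2)
      = (s^(p-2)/F) * (p * t^(p-1) * B * G^(p-1) - (q-1) * t^p * G^p)
        + (s^(q-2)/F) * (p * t^(p-1) * B * G^(q-1) - (q-1) * t^p * G^q) := by
    rw [hGp1, hGq1, hGp, hGq, hD, hF, hsp1, hsq1]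
    have h1 : s * s^(p-2) + s * s^(q-2) ≠ 0 := by positivity
    have h2 : s^(p-2) + s^(q-2) ≠ 0 := by positivity
    field_simp
  have hqne : q ≠ 0 := by linarith
  -- bracket p bound
  have hbrp : p * t^(p-1) * B * G^(p-1) - (q-1) * t^p * G^p
      ≤ (q-1)^(1-p) * p^p * B^p := by
    have hy := young_lite hp hq1 (mul_nonneg ht hGpos.le)
      (mul_nonneg (by linarith : (0:ℝ) ≤ p) hB)
    rw [Real.mul_rpow ht hGpos.le, Real.mul_rpow ht hGpos.le,
      Real.mul_rpow (by linarith : (0:ℝ) ≤ p) hB] at hy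
    linarith [hy]
  -- bracket q bound
  have hbrq : p * t^(p-1) * B * G^(q-1) - (q-1) * t^p * G^q
      ≤ (q-1)^(1-q) * p^q * (t^(p-q) * B^q) := by
    have hx0 : (0:ℝ) ≤ t^(p/q) * G := by positivity
    have hy0 : (0:ℝ) ≤ p * t^(p/q-1) * B := by positivity
    have hy := young_lite hq hq1 hx0 hy0
    -- rewrite the powers
    have e1 : (t^(p/q) * G)^(q-1) = t^(p - p/q) * G^(q-1) := by
      rw [Real.mul_rpow (by positivity) hGpos.le, ← Real.rpow_mul ht,
        show (p/q) * (q-1) = p - p/q by field_simp]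
    have e2 : (t^(p/q) * G)^q = t^p * G^q := by
      rw [Real.mul_rpow (by positivity) hGpos.le, ← Real.rpow_mul ht,
        div_mul_cancel₀ p hqne]
    have e3 : (p * t^(p/q-1) * B)^q = p^q * (t^(p-q) * B^q) := by
      rw [Real.mul_rpow (by positivity) hB, Real.mul_rpow (by linarith : (0:ℝ) ≤ p) (by positivity),
        ← Real.rpow_mul ht, show (p/q - 1) * q = p - q by field_simp]
      ring
    rw [e1, e2, e3] at hy
    have e4 : p * t^(p/q-1) * B * (t^(p - p/q) * G^(q-1)) = p * t^(p-1) * B * G^(q-1) := by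
      rw [show p - 1 = (p/q - 1) + (p - p/q) by ring, Real.rpow_add htpos]
      ring
    rw [e4] at hy
    linarith [hy]
  -- θ bounds
  have hθp0 : (0:ℝ) ≤ s^(p-2)/F := by positivity
  have hθq0 : (0:ℝ) ≤ s^(q-2)/F := by positivity
  have hθp1 : s^(p-2)/F ≤ 1 := by
    rw [div_le_one hFpos, hF]; linarith
  have hθq1 : s^(q-2)/F ≤ 1 := by
    rw [div_le_one hFpos, hF]; linarith
  have hCpB : (0:ℝ) ≤ (q-1)^(1-p) * p^p * B^p := by positivity
  have hCqB : (0:ℝ) ≤ (q-1)^(1-q) * p^q * (t^(p-q) * B^q) := by positivity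
  have final1 : (s^(p-2)/F) * (p * t^(p-1) * B * G^(p-1) - (q-1) * t^p * G^p)
      ≤ (q-1)^(1-p) * p^p * B^p :=
    le_trans (mul_le_mul_of_nonneg_left hbrp hθp0)
      (by linarith [mul_le_mul_of_nonneg_right hθp1 hCpB])
  have final2 : (s^(q-2)/F) * (p * t^(p-1) * B * G^(q-1) - (q-1) * t^p * G^q)
      ≤ (q-1)^(1-q) * p^q * (t^(p-q) * B^q) :=
    le_trans (mul_le_mul_of_nonneg_left hbrq hθq0)
      (by linarith [mul_le_mul_of_nonneg_right hθq1 hCqB])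
  have expand : (B ^ p + t ^ (p-q) * B ^ q) * ((q-1) ^ (1-p) * p ^ p + (q-1) ^ (1-q) * p ^ q)
      = (q-1)^(1-p) * p^p * B^p + (q-1)^(1-q) * p^q * (t^(p-q) * B^q)
        + ((q-1)^(1-q) * p^q * B^p + (q-1)^(1-p) * p^p * (t^(p-q) * B^q)) := by ring
  have hextra : (0:ℝ) ≤ (q-1)^(1-q) * p^q * B^p + (q-1)^(1-p) * p^p * (t^(p-q) * B^q) := by
    positivity
  calc (A ^ (p-2) + A ^ (q-2)) *
        (t ^ p * (-(((s^(p-1) + s^(q-1))^2)⁻¹) * (((p-1)*s^(p-2) + (q-1)*s^(q-2)) * (A*A)))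
          + (s^(p-1) + s^(q-1))⁻¹ * (p * t^(p-1) * IP))
      ≤ (A ^ (p-2) + A ^ (q-2)) *
        ((p * t^(p-1) * (B*A) * D - (q-1) * t^p * F * (A*A)) / D^2) := step1
    _ = (s^(p-2)/F) * (p * t^(p-1) * B * G^(p-1) - (q-1) * t^p * G^p)
        + (s^(q-2)/F) * (p * t^(p-1) * B * G^(q-1) - (q-1) * t^p * G^q) := step2
    _ ≤ (q-1)^(1-p) * p^p * B^p + (q-1)^(1-q) * p^q * (t^(p-q) * B^q) := by
        linarith
    _ ≤ (B ^ p + t ^ (p-q) * B ^ q) * ((q-1) ^ (1-p) * p ^ p + (q-1) ^ (1-q) * p ^ q) := by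
        rw [expand]; linarith

open scoped RealInnerProductSpace

/-- Picone-type inequality for the (p,q)-Laplacian: for `1 < q < p` there exists `ρ > 0`
(depending only on `p`, `q`) such that for all open `Ω ⊆ ℝ^N`, differentiable `u > 0`,
`φ ≥ 0` on `Ω`, and `x ∈ Ω`:
`(|∇u|^(p-2) + |∇u|^(q-2))·⟨∇u, ∇(φ^p/(u^(p-1)+u^(q-1)))⟩ ≤ (|∇φ|^p + |∇(φ^(p/q))|^q)/ρ`. -/
theorem stmt2 (p q : ℝ) (hq : 1 < q) (hqp : q < p) :
    ∃ ρ : ℝ, 0 < ρ ∧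
      ∀ (N : ℕ), 0 < N →
        ∀ (Ω : Set (EuclideanSpace ℝ (Fin N))), IsOpen Ω →
          ∀ (u φ : EuclideanSpace ℝ (Fin N) → ℝ),
            (∀ x ∈ Ω, DifferentiableAt ℝ u x) →
            (∀ x ∈ Ω, DifferentiableAt ℝ φ x) →
            (∀ x ∈ Ω, 0 < u x) →
            (∀ x ∈ Ω, 0 ≤ φ x) →
            ∀ x ∈ Ω,
              (‖gradient u x‖ ^ (p - 2) + ‖gradient u x‖ ^ (q - 2)) *
                  ⟪gradient u x,
                    gradient (fun y => φ y ^ p / (u y ^ (p - 1) + u y ^ (q - 1))) x⟫ ≤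
                (‖gradient φ x‖ ^ p + ‖gradient (fun y => φ y ^ (p / q)) x‖ ^ q) / ρ := by
  obtain ⟨C, hC, hkey⟩ := picone_key p q hq hqp
  refine ⟨C⁻¹, inv_pos.mpr hC, ?_⟩
  intro N hN Ω hΩ u φ hu hφ hupos hφnn x hx
  have hp : 1 < p := hq.trans hqp
  have hs : 0 < u x := hupos x hx
  have ht : 0 ≤ φ x := hφnn x hx
  have hud : HasFDerivAt u (fderiv ℝ u x) x := (hu x hx).hasFDerivAt
  have hφd : HasFDerivAt φ (fderiv ℝ φ x) x := (hφ x hx).hasFDerivAt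
  set u' := fderiv ℝ u x with hu'def
  set φ' := fderiv ℝ φ x with hφ'def
  set s := u x with hsdef
  set t := φ x with htdef
  set a := gradient u x with hadef
  set b := gradient φ x with hbdef
  have hDpos : (0:ℝ) < s^(p-1) + s^(q-1) := by positivity
  -- derivative of the denominator
  have h1 : HasFDerivAt (fun y => u y ^ (p-1)) (((p-1) * s^(p-2)) • u') x := by
    have := hud.rpow_const (p := p-1) (Or.inl hs.ne')
    rwa [show p-1-1 = p-2 by ring] at this
  have h2 : HasFDerivAt (fun y => u y ^ (q-1)) (((q-1) * s^(q-2)) • u') x := by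
    have := hud.rpow_const (p := q-1) (Or.inl hs.ne')
    rwa [show q-1-1 = q-2 by ring] at this
  have hden : HasFDerivAt (fun y => u y ^ (p-1) + u y ^ (q-1))
      ((((p-1) * s^(p-2)) + ((q-1) * s^(q-2))) • u') x := by
    rw [add_smul]; exact h1.add h2
  have hinv : HasFDerivAt (fun y => (u y ^ (p-1) + u y ^ (q-1))⁻¹)
      ((-((s^(p-1) + s^(q-1))^2)⁻¹) •
        ((((p-1) * s^(p-2)) + ((q-1) * s^(q-2))) • u')) x :=
    (hasDerivAt_inv hDpos.ne').comp_hasFDerivAt x hden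
  have hnum : HasFDerivAt (fun y => φ y ^ p) ((p * t^(p-1)) • φ') x :=
    hφd.rpow_const (Or.inr hp.le)
  set W : EuclideanSpace ℝ (Fin N) →L[ℝ] ℝ :=
    t^p • ((-((s^(p-1) + s^(q-1))^2)⁻¹) •
        ((((p-1) * s^(p-2)) + ((q-1) * s^(q-2))) • u'))
      + (s^(p-1) + s^(q-1))⁻¹ • ((p * t^(p-1)) • φ') with hWdef
  have hw : HasFDerivAt (fun y => φ y ^ p / (u y ^ (p-1) + u y ^ (q-1))) W x := by
    have heq : (fun y => φ y ^ p / (u y ^ (p-1) + u y ^ (q-1)))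
        = fun y => φ y ^ p * (u y ^ (p-1) + u y ^ (q-1))⁻¹ := by
      funext y; rw [div_eq_mul_inv]
    rw [heq]
    exact hnum.mul hinv
  -- gradients
  have hgw : gradient (fun y => φ y ^ p / (u y ^ (p-1) + u y ^ (q-1))) x
      = (InnerProductSpace.toDual ℝ _).symm W :=
    (hasFDerivAt_iff_hasGradientAt.mp hw).gradient
  have hpq1 : 1 < p / q := (one_lt_div (by linarith)).mpr hqp
  have hg2 : HasFDerivAt (fun y => φ y ^ (p/q)) ((p/q * t^(p/q-1)) • φ') x :=
    hφd.rpow_const (Or.inr hpq1.le)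
  have hgφ : gradient (fun y => φ y ^ (p/q)) x = (p/q * t^(p/q-1)) • b := by
    have := (hasFDerivAt_iff_hasGradientAt.mp hg2).gradient
    rw [this, map_smul]
    rfl
  -- inner product identities
  have hinner_a : ∀ y, u' y = ⟪a, y⟫ := fun y =>
    (InnerProductSpace.toDual_symm_apply).symm
  have hinner_b : ∀ y, φ' y = ⟪b, y⟫ := fun y =>
    (InnerProductSpace.toDual_symm_apply).symm
  have hWa : ⟪a, gradient (fun y => φ y ^ p / (u y ^ (p-1) + u y ^ (q-1))) x⟫ = W a := by
    rw [hgw, real_inner_comm]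
    exact InnerProductSpace.toDual_symm_apply
  have hWa2 : W a = t ^ p * (-(((s^(p-1) + s^(q-1))^2)⁻¹) *
        (((p-1)*s^(p-2) + (q-1)*s^(q-2)) * (‖a‖*‖a‖)))
      + (s^(p-1) + s^(q-1))⁻¹ * (p * t^(p-1) * ⟪b, a⟫) := by
    simp only [hWdef, ContinuousLinearMap.add_apply, ContinuousLinearMap.coe_smul',
      Pi.smul_apply, smul_eq_mul]
    rw [hinner_a a, hinner_b a, real_inner_self_eq_norm_mul_norm]
  have hc0 : (0:ℝ) ≤ p/q * t^(p/q-1) :=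
    mul_nonneg (div_nonneg (by linarith) (by linarith)) (Real.rpow_nonneg ht _)
  have hnorm : ‖(p/q * t^(p/q-1)) • b‖ ^ q = (p/q)^q * (t^(p-q) * ‖b‖^q) := by
    rw [norm_smul, Real.norm_eq_abs, abs_of_nonneg hc0,
      Real.mul_rpow hc0 (norm_nonneg b),
      Real.mul_rpow (div_nonneg (by linarith) (by linarith)) (Real.rpow_nonneg ht _),
      ← Real.rpow_mul ht, show (p/q-1)*q = p-q by field_simp]
    ring
  have hIP : ⟪b, a⟫ ≤ ‖b‖ * ‖a‖ := real_inner_le_norm b a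
  have hmain := hkey ‖a‖ ‖b‖ t s ⟪b, a⟫ (norm_nonneg a) (norm_nonneg b) ht hs hIP
  have h1q : (1:ℝ) ≤ (p/q)^q := by
    calc (1:ℝ) = 1 ^ q := (Real.one_rpow q).symm
      _ ≤ (p/q)^q := Real.rpow_le_rpow zero_le_one hpq1.le (by linarith)
  have hX : (0:ℝ) ≤ t^(p-q) * ‖b‖^q := by positivity
  have hstep : (‖b‖^p + t^(p-q) * ‖b‖^q) * C
      ≤ (‖b‖^p + (p/q)^q * (t^(p-q) * ‖b‖^q)) * C := by
    apply mul_le_mul_of_nonneg_right _ hC.le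
    have := mul_le_mul_of_nonneg_right h1q hX
    rw [one_mul] at this
    linarith
  rw [hWa, hWa2, hgφ, hnorm, div_eq_mul_inv, inv_inv]
  exact le_trans hmain hstep
end

section
/- Let 1 < q < p be real numbers and let ρ₁ > 0 satisfy ρ₁ ≤ g(p,q;t) for all t > 0. Then for every open set Ω ⊆ ℝ^N, every pair of functions u, φ : ℝ^N → ℝ differentiable at every point of Ω with u > 0 and φ ≥ 0 on Ω, and every x ∈ Ω, one has |∇u(x)|^(p-2) · ⟨∇u(x), ∇(φ^p/(u^(p-1) + u^(q-1)))(x)⟩ ≤ |∇φ(x)|^p / ρ₁^(p-1). -/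
open scoped RealInnerProductSpace

private lemma young_aux {p ρ t B : ℝ} (hp : 1 < p) (hρ : 0 < ρ) (ht : 0 ≤ t) (hB : 0 ≤ B) :
    p * (t ^ (p-1) * B) ≤ (p-1) * ρ * t ^ p + B ^ p / ρ ^ (p-1) := by
  have hp0 : (0:ℝ) < p := by linarith
  have hp1 : (0:ℝ) < p - 1 := by linarith
  set c : ℝ := (p-1)/p with hc
  have hcpos : 0 < ρ ^ c := Real.rpow_pos_of_pos hρ _
  have hpq : (p/(p-1)).HolderConjugate p := by
    rw [Real.holderConjugate_iff]; constructor
    · rw [lt_div_iff₀ hp1]; linarith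
    · field_simp; ring
  have hxy := Real.young_inequality_of_nonneg
      (mul_nonneg (Real.rpow_nonneg hρ.le c) (Real.rpow_nonneg ht (p-1)))
      (div_nonneg hB hcpos.le) hpq
  have e1 : (ρ ^ c * t ^ (p-1)) ^ (p/(p-1)) = ρ * t ^ p := by
    rw [Real.mul_rpow (Real.rpow_nonneg hρ.le c) (Real.rpow_nonneg ht _),
        ← Real.rpow_mul hρ.le, ← Real.rpow_mul ht]
    rw [show c * (p/(p-1)) = 1 by rw [hc]; field_simp,
        show (p-1) * (p/(p-1)) = p by field_simp, Real.rpow_one]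
  have e2 : (B / ρ ^ c) ^ p = B ^ p / ρ ^ (p-1) := by
    rw [Real.div_rpow hB hcpos.le, ← Real.rpow_mul hρ.le]
    rw [show c * p = p - 1 by rw [hc]; field_simp]
  have e3 : ρ ^ c * t ^ (p-1) * (B / ρ ^ c) = t ^ (p-1) * B := by
    field_simp
  rw [e1, e2, e3] at hxy
  have h4 : (ρ*t^p) / (p/(p-1)) = (p-1)*ρ*t^p / p := by
    field_simp
  rw [h4] at hxy
  calc p * (t^(p-1)*B) ≤ p * ((p-1)*ρ*t^p/p + B^p/ρ^(p-1)/p) :=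
        mul_le_mul_of_nonneg_left hxy hp0.le
    _ = (p-1)*ρ*t^p + B^p/ρ^(p-1) := by field_simp

private lemma main_scalar (p q ρ u0 A B φ0 : ℝ) (hq : 1 < q) (hqp : q < p) (hρ : 0 < ρ)
    (hu0 : 0 < u0) (hg : ρ ≤ g p q u0) (hA : 0 < A) (hB : 0 ≤ B) (hφ0 : 0 ≤ φ0) :
    A ^ (p-2) *
      (φ0 ^ p * (-((u0 ^ (p-1) + u0 ^ (q-1)) ^ 2)⁻¹) *
          (((p-1) * u0 ^ (p-1-1) + (q-1) * u0 ^ (q-1-1)) * (A * A)) +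
        (u0 ^ (p-1) + u0 ^ (q-1))⁻¹ * (p * φ0 ^ (p-1)) * (B * A)) ≤
      B ^ p / ρ ^ (p-1) := by
  have hp1 : 1 < p := hq.trans hqp
  have hp0 : (0:ℝ) < p - 1 := by linarith
  set D : ℝ := u0 ^ (p-1) + u0 ^ (q-1) with hDdef
  have hD : 0 < D := by positivity
  set Ac : ℝ := (p-1) * u0 ^ (p-1-1) + (q-1) * u0 ^ (q-1-1) with hAcdef
  have hAc : ρ * ((p-1) * D ^ ((p-2)/(p-1))) ≤ Ac := by
    have hgu := hg
    unfold g at hgu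
    have hpos : 0 < (p-1) * D ^ ((p-2)/(p-1)) := by positivity
    have h2 : p - 1 - 1 = p - 2 := by ring
    have h3 : q - 1 - 1 = q - 2 := by ring
    rw [hAcdef, h2, h3]
    rw [← hDdef] at hgu
    exact (le_div_iff₀ hpos).mp hgu
  set t : ℝ := φ0 * A / D ^ ((p-1)⁻¹) with htdef
  have ht : 0 ≤ t := by positivity
  have htp1 : t ^ (p-1) = φ0 ^ (p-1) * A ^ (p-1) / D := by
    rw [htdef, Real.div_rpow (by positivity) (by positivity),
        Real.mul_rpow hφ0 hA.le, ← Real.rpow_mul hD.le,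
        inv_mul_cancel₀ hp0.ne', Real.rpow_one]
  have htp : t ^ p = φ0 ^ p * A ^ p / D ^ (p/(p-1)) := by
    rw [htdef, Real.div_rpow (by positivity) (by positivity),
        Real.mul_rpow hφ0 hA.le, ← Real.rpow_mul hD.le,
        show (p-1)⁻¹ * p = p/(p-1) by ring]
  have e1 : A ^ (p-2) * A = A ^ (p-1) := by
    rw [← Real.rpow_add_one hA.ne']; ring_nf
  have e2 : A ^ (p-1) * A = A ^ p := by
    rw [← Real.rpow_add_one hA.ne']; ring_nf
  have expand : A ^ (p-2) *
      (φ0 ^ p * (-(D ^ 2)⁻¹) * (Ac * (A * A)) + D⁻¹ * (p * φ0 ^ (p-1)) * (B * A))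
      = p * ((φ0 ^ (p-1) * A ^ (p-1) / D) * B) - φ0 ^ p * A ^ p * Ac / D ^ 2 := by
    rw [← e2, ← e1]
    ring
  rw [expand, ← htp1]
  have hterm : ρ * (p-1) * t ^ p ≤ φ0 ^ p * A ^ p * Ac / D ^ 2 := by
    rw [htp]
    have hDD : D ^ ((p-2)/(p-1)) * D ^ (p/(p-1)) = D ^ 2 := by
      rw [← Real.rpow_add hD, show (p-2)/(p-1) + p/(p-1) = 2 by field_simp; ring,
          show (2:ℝ) = ((2:ℕ):ℝ) by norm_num, Real.rpow_natCast]
    have h6 : ρ * (p-1) * D ^ 2 ≤ Ac * D ^ (p/(p-1)) := by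
      calc ρ * (p-1) * D ^ 2 = ρ * ((p-1) * D ^ ((p-2)/(p-1))) * D ^ (p/(p-1)) := by
            rw [← hDD]; ring
        _ ≤ Ac * D ^ (p/(p-1)) := mul_le_mul_of_nonneg_right hAc (by positivity)
    have h7 := mul_le_mul_of_nonneg_left h6 (show (0:ℝ) ≤ φ0 ^ p * A ^ p by positivity)
    rw [show ρ * (p-1) * (φ0 ^ p * A ^ p / D ^ (p/(p-1)))
          = ρ * (p-1) * (φ0 ^ p * A ^ p) / D ^ (p/(p-1)) by ring,
        div_le_div_iff₀ (by positivity) (by positivity)]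
    calc ρ * (p-1) * (φ0 ^ p * A ^ p) * D ^ 2 = φ0 ^ p * A ^ p * (ρ * (p-1) * D ^ 2) := by ring
      _ ≤ φ0 ^ p * A ^ p * (Ac * D ^ (p/(p-1))) := h7
      _ = φ0 ^ p * A ^ p * Ac * D ^ (p/(p-1)) := by ring
  have hy := young_aux hp1 hρ ht hB
  linarith

set_option maxHeartbeats 1600000

/-- For `1 < q < p` and `0 < ρ₁ ≤ g p q t` for all `t > 0`:
`|∇u|^(p-2)·⟨∇u, ∇(φ^p/(u^(p-1)+u^(q-1)))⟩ ≤ |∇φ|^p / ρ₁^(p-1)`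
for differentiable `u > 0`, `φ ≥ 0` on an open set `Ω`. -/
theorem stmt3 (p q : ℝ) (hq : 1 < q) (hqp : q < p) (ρ₁ : ℝ) (hρ₁ : 0 < ρ₁)
    (hρ₁g : ∀ t : ℝ, 0 < t → ρ₁ ≤ g p q t) :
    ∀ (N : ℕ), 0 < N →
      ∀ (Ω : Set (EuclideanSpace ℝ (Fin N))), IsOpen Ω →
        ∀ (u φ : EuclideanSpace ℝ (Fin N) → ℝ),
          (∀ x ∈ Ω, DifferentiableAt ℝ u x) →
          (∀ x ∈ Ω, DifferentiableAt ℝ φ x) →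
          (∀ x ∈ Ω, 0 < u x) →
          (∀ x ∈ Ω, 0 ≤ φ x) →
          ∀ x ∈ Ω,
            ‖gradient u x‖ ^ (p - 2) *
                ⟪gradient u x,
                  gradient (fun y => φ y ^ p / (u y ^ (p - 1) + u y ^ (q - 1))) x⟫ ≤
              ‖gradient φ x‖ ^ p / ρ₁ ^ (p - 1) := by
  intro N hN Ω hΩ u φ hu hφ hupos hφnn x hx
  have hp1 : 1 < p := hq.trans hqp
  set a := gradient u x with ha_def
  set b := gradient φ x with hb_def
  have hRHS : 0 ≤ ‖b‖ ^ p / ρ₁ ^ (p - 1) := by positivity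
  by_cases ha0 : a = 0
  · rw [ha0, inner_zero_left, mul_zero]; exact hRHS
  have hAn : 0 < ‖a‖ := norm_pos_iff.mpr ha0
  have ux : 0 < u x := hupos x hx
  set D : ℝ := u x ^ (p-1) + u x ^ (q-1) with hDdef
  have hD : 0 < D := by positivity
  have hu' := (hu x hx).hasFDerivAt
  have hφ' := (hφ x hx).hasFDerivAt
  set U := fderiv ℝ u x with hU_def
  set F := fderiv ℝ φ x with hF_def
  have hnum : HasFDerivAt (fun y => φ y ^ p) ((p * φ x ^ (p-1)) • F) x :=
    hφ'.rpow_const (Or.inr hp1.le)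
  set den' : EuclideanSpace ℝ (Fin N) →L[ℝ] ℝ :=
    ((p-1) * u x ^ (p-1-1)) • U + ((q-1) * u x ^ (q-1-1)) • U with hden'_def
  have hden : HasFDerivAt (fun y => u y ^ (p-1) + u y ^ (q-1)) den' x :=
    (hu'.rpow_const (Or.inl ux.ne')).add (hu'.rpow_const (Or.inl ux.ne'))
  have hinv : HasFDerivAt (fun y => (u y ^ (p-1) + u y ^ (q-1))⁻¹)
      ((-(D^2)⁻¹) • den') x :=
    (hasDerivAt_inv hD.ne').comp_hasFDerivAt x hden
  set L : EuclideanSpace ℝ (Fin N) →L[ℝ] ℝ :=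
    φ x ^ p • ((-(D^2)⁻¹) • den') + D⁻¹ • ((p * φ x ^ (p-1)) • F) with hL_def
  have hw : HasFDerivAt (fun y => φ y ^ p / (u y ^ (p - 1) + u y ^ (q - 1))) L x := by
    simp only [div_eq_mul_inv]
    exact hnum.mul hinv
  have hgrad : gradient (fun y => φ y ^ p / (u y ^ (p - 1) + u y ^ (q - 1))) x
      = (InnerProductSpace.toDual ℝ (EuclideanSpace ℝ (Fin N))).symm L := by
    rw [gradient, hw.fderiv]
  have hFa : F a = ⟪b, a⟫ := by
    rw [hb_def, gradient, hF_def, InnerProductSpace.toDual_symm_apply]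
  have hUa : U a = ⟪a, a⟫ := by
    rw [ha_def, gradient, hU_def, InnerProductSpace.toDual_symm_apply]
  have hGa : ⟪a, gradient (fun y => φ y ^ p / (u y ^ (p - 1) + u y ^ (q - 1))) x⟫
      = φ x ^ p * (-(D^2)⁻¹) * (((p-1) * u x ^ (p-1-1) + (q-1) * u x ^ (q-1-1)) * ⟪a, a⟫)
        + D⁻¹ * (p * φ x ^ (p-1)) * ⟪b, a⟫ := by
    rw [real_inner_comm, hgrad, InnerProductSpace.toDual_symm_apply]
    simp only [hL_def, hden'_def, ContinuousLinearMap.add_apply,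
      ContinuousLinearMap.coe_smul', Pi.smul_apply, smul_eq_mul, hFa, hUa]
    ring
  rw [hGa]
  have hinner : ⟪b, a⟫ ≤ ‖b‖ * ‖a‖ := real_inner_le_norm b a
  have haa : ⟪a, a⟫ = ‖a‖ * ‖a‖ := real_inner_self_eq_norm_mul_norm a
  have hcoef : 0 ≤ ‖a‖ ^ (p-2) * (D⁻¹ * (p * φ x ^ (p-1))) := by
    have : 0 ≤ φ x := hφnn x hx
    positivity
  calc ‖a‖ ^ (p-2) * (φ x ^ p * (-(D^2)⁻¹) *
          (((p-1) * u x ^ (p-1-1) + (q-1) * u x ^ (q-1-1)) * ⟪a, a⟫)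
        + D⁻¹ * (p * φ x ^ (p-1)) * ⟪b, a⟫)
      ≤ ‖a‖ ^ (p-2) * (φ x ^ p * (-(D^2)⁻¹) *
          (((p-1) * u x ^ (p-1-1) + (q-1) * u x ^ (q-1-1)) * (‖a‖ * ‖a‖))
        + D⁻¹ * (p * φ x ^ (p-1)) * (‖b‖ * ‖a‖)) := by
        rw [haa]
        have h1 : ‖a‖ ^ (p-2) * (D⁻¹ * (p * φ x ^ (p-1))) * ⟪b, a⟫
            ≤ ‖a‖ ^ (p-2) * (D⁻¹ * (p * φ x ^ (p-1))) * (‖b‖ * ‖a‖) :=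
          mul_le_mul_of_nonneg_left hinner hcoef
        nlinarith [h1]
    _ ≤ ‖b‖ ^ p / ρ₁ ^ (p - 1) :=
        main_scalar p q ρ₁ (u x) ‖a‖ ‖b‖ (φ x) hq hqp hρ₁ ux (hρ₁g (u x) ux)
          hAn (norm_nonneg b) (hφnn x hx)
end

section
/- Let 1 < q < p be real numbers and let ρ₂ > 0 satisfy ρ₂ ≤ g(q,p;t) for all t > 0. Then for every open set Ω ⊆ ℝ^N, every pair of functions u, ψ : ℝ^N → ℝ differentiable at every point of Ω with u > 0 and ψ ≥ 0 on Ω, and every x ∈ Ω, one has |∇u(x)|^(q-2) · ⟨∇u(x), ∇(ψ^q/(u^(p-1) + u^(q-1)))(x)⟩ ≤ |∇ψ(x)|^q / ρ₂^(q-1). -/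
open scoped RealInnerProductSpace

open Real in

lemma young_aux_s4 (q ρ X Y : ℝ) (hq : 1 < q) (hρ : 0 < ρ) (hX : 0 ≤ X) (hY : 0 ≤ Y) :
    q * X ^ (q - 1) * Y ≤ (q - 1) * ρ * X ^ q + Y ^ q / ρ ^ (q - 1) := by
  have hq0 : (0:ℝ) < q := lt_trans one_pos hq
  have h1 : (0:ℝ) ≤ (q - 1) / q := div_nonneg (by linarith) hq0.le
  have h2 : (0:ℝ) ≤ 1 / q := by positivity
  have hp1 : (0:ℝ) ≤ ρ * X ^ q := by positivity
  have hp2 : (0:ℝ) ≤ Y ^ q / ρ ^ (q - 1) := by positivity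
  have hw : (q - 1) / q + 1 / q = 1 := by field_simp; ring
  have key := Real.geom_mean_le_arith_mean2_weighted h1 h2 hp1 hp2 hw
  have hXq : ((X : ℝ) ^ q) ^ ((q - 1) / q) = X ^ (q - 1) := by
    rw [← Real.rpow_mul hX]
    congr 1
    field_simp
  have hYq : ((Y : ℝ) ^ q) ^ (1 / q) = Y := by
    rw [← Real.rpow_mul hY, mul_one_div, div_self hq0.ne', Real.rpow_one]
  have hρe : ((ρ : ℝ) ^ (q - 1)) ^ (1 / q) = ρ ^ ((q - 1) / q) := by
    rw [← Real.rpow_mul hρ.le, mul_one_div]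
  have hρpos : (0:ℝ) < ρ ^ ((q - 1) / q) := Real.rpow_pos_of_pos hρ _
  have hlhs : (ρ * X ^ q) ^ ((q - 1) / q) * (Y ^ q / ρ ^ (q - 1)) ^ (1 / q)
      = X ^ (q - 1) * Y := by
    rw [Real.mul_rpow hρ.le (Real.rpow_nonneg hX q),
      Real.div_rpow (Real.rpow_nonneg hY q) (Real.rpow_nonneg hρ.le _), hXq, hYq, hρe]
    field_simp
  rw [hlhs] at key
  have h3 := mul_le_mul_of_nonneg_left key hq0.le
  calc q * X ^ (q - 1) * Y = q * (X ^ (q - 1) * Y) := by ring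
    _ ≤ q * ((q - 1) / q * (ρ * X ^ q) + 1 / q * (Y ^ q / ρ ^ (q - 1))) := h3
    _ = (q - 1) * ρ * X ^ q + Y ^ q / ρ ^ (q - 1) := by field_simp

lemma key_aux (q ρ : ℝ) (hq : 1 < q) (hρ : 0 < ρ)
    (A B : ℝ) (hA : 0 < A) (hB : (q - 1) * ρ * A ^ ((q - 2) / (q - 1)) ≤ B)
    (a : ℝ) (ha : 0 ≤ a) (V W I : ℝ) (hV : 0 ≤ V) (hW : 0 ≤ W)
    (hI : I ≤ V * W) (hI0 : V = 0 → I = 0) :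
    V ^ (q - 2) * ((q * a ^ (q - 1) * I * A - a ^ q * B * V ^ (2:ℕ)) / A ^ (2:ℕ))
      ≤ W ^ q / ρ ^ (q - 1) := by
  have hq1 : (0:ℝ) < q - 1 := by linarith
  have hq0 : (0:ℝ) < q := by linarith
  have hrhs : (0:ℝ) ≤ W ^ q / ρ ^ (q - 1) := by positivity
  rcases eq_or_lt_of_le hV with hV0 | hVpos
  · have hz : V ^ (q - 2) * ((q * a ^ (q - 1) * I * A - a ^ q * B * V ^ (2:ℕ)) / A ^ (2:ℕ))
        = 0 := by
      rw [hI0 hV0.symm, ← hV0]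
      norm_num
    rw [hz]; exact hrhs
  · have hVq2 : (0:ℝ) ≤ V ^ (q - 2) := Real.rpow_nonneg hV _
    set X := a * V / A ^ (1 / (q - 1)) with hXdef
    have hAe : (0:ℝ) < A ^ (1 / (q - 1)) := Real.rpow_pos_of_pos hA _
    have hX : 0 ≤ X := by positivity
    have hVpow1 : V ^ (q - 2) * V = V ^ (q - 1) := by
      nth_rewrite 2 [← Real.rpow_one V]
      rw [← Real.rpow_add hVpos]
      congr 1; ring
    have hVpow2 : V ^ (q - 2) * V ^ (2:ℕ) = V ^ q := by
      rw [← Real.rpow_natCast V 2, ← Real.rpow_add hVpos]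
      congr 1; ring
    have hX1 : X ^ (q - 1) = a ^ (q - 1) * V ^ (q - 1) / A := by
      rw [hXdef, Real.div_rpow (by positivity) hAe.le, Real.mul_rpow ha hV,
        ← Real.rpow_mul hA.le, one_div, inv_mul_cancel₀ hq1.ne', Real.rpow_one]
    have hX2 : X ^ q = a ^ q * V ^ q / A ^ (1 / (q - 1) * q) := by
      rw [hXdef, Real.div_rpow (by positivity) hAe.le, Real.mul_rpow ha hV,
        ← Real.rpow_mul hA.le]
    have hAexp : A ^ ((q - 2) / (q - 1)) = A ^ (2:ℕ) / A ^ (1 / (q - 1) * q) := by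
      rw [← Real.rpow_natCast A 2, ← Real.rpow_sub hA]
      congr 1
      field_simp
      ring
    have hAq : (0:ℝ) < A ^ (1 / (q - 1) * q) := Real.rpow_pos_of_pos hA _
    have hA2 : (0:ℝ) < A ^ (2:ℕ) := by positivity
    -- step 1
    have e1 : V ^ (q - 2) * ((q * a ^ (q - 1) * I * A - a ^ q * B * V ^ (2:ℕ)) / A ^ (2:ℕ))
        = (q * a ^ (q - 1) * A * V ^ (q - 2) * I - a ^ q * B * V ^ q) / A ^ (2:ℕ) := by
      rw [← hVpow2]; ring
    have e2 : q * a ^ (q - 1) * A * V ^ (q - 2) * I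
        ≤ q * a ^ (q - 1) * V ^ (q - 1) * W * A := by
      calc q * a ^ (q - 1) * A * V ^ (q - 2) * I
          ≤ q * a ^ (q - 1) * A * V ^ (q - 2) * (V * W) := by
            apply mul_le_mul_of_nonneg_left hI
            positivity
        _ = q * a ^ (q - 1) * V ^ (q - 1) * W * A := by rw [← hVpow1]; ring
    have e3 : (q * a ^ (q - 1) * A * V ^ (q - 2) * I - a ^ q * B * V ^ q) / A ^ (2:ℕ)
        ≤ (q * a ^ (q - 1) * V ^ (q - 1) * W * A - a ^ q * B * V ^ q) / A ^ (2:ℕ) := by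
      apply (div_le_div_iff_of_pos_right hA2).mpr
      linarith
    -- step 2
    have e4 : (q * a ^ (q - 1) * V ^ (q - 1) * W * A - a ^ q * B * V ^ q) / A ^ (2:ℕ)
        = q * X ^ (q - 1) * W - a ^ q * B * V ^ q / A ^ (2:ℕ) := by
      rw [hX1]
      field_simp
    -- step 3
    have e5 : (q - 1) * ρ * X ^ q ≤ a ^ q * B * V ^ q / A ^ (2:ℕ) := by
      have h := mul_le_mul_of_nonneg_left hB
        (show (0:ℝ) ≤ a ^ q * V ^ q / A ^ (2:ℕ) by positivity)
      calc (q - 1) * ρ * X ^ q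
          = a ^ q * V ^ q / A ^ (2:ℕ) * ((q - 1) * ρ * A ^ ((q - 2) / (q - 1))) := by
            rw [hX2, hAexp]
            field_simp
        _ ≤ a ^ q * V ^ q / A ^ (2:ℕ) * B := h
        _ = a ^ q * B * V ^ q / A ^ (2:ℕ) := by ring
    have young := young_aux_s4 q ρ X W hq hρ hX hW
    calc V ^ (q - 2) * ((q * a ^ (q - 1) * I * A - a ^ q * B * V ^ (2:ℕ)) / A ^ (2:ℕ))
        = (q * a ^ (q - 1) * A * V ^ (q - 2) * I - a ^ q * B * V ^ q) / A ^ (2:ℕ) := e1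
      _ ≤ (q * a ^ (q - 1) * V ^ (q - 1) * W * A - a ^ q * B * V ^ q) / A ^ (2:ℕ) := e3
      _ = q * X ^ (q - 1) * W - a ^ q * B * V ^ q / A ^ (2:ℕ) := e4
      _ ≤ q * X ^ (q - 1) * W - (q - 1) * ρ * X ^ q := by linarith
      _ ≤ W ^ q / ρ ^ (q - 1) := by linarith

/-- For `1 < q < p` and `0 < ρ₂ ≤ g q p t` for all `t > 0`:
`|∇u|^(q-2)·⟨∇u, ∇(ψ^q/(u^(p-1)+u^(q-1)))⟩ ≤ |∇ψ|^q / ρ₂^(q-1)`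
for differentiable `u > 0`, `ψ ≥ 0` on an open set `Ω`. -/
theorem stmt4 (p q : ℝ) (hq : 1 < q) (hqp : q < p) (ρ₂ : ℝ) (hρ₂ : 0 < ρ₂)
    (hρ₂g : ∀ t : ℝ, 0 < t → ρ₂ ≤ g q p t) :
    ∀ (N : ℕ), 0 < N →
      ∀ (Ω : Set (EuclideanSpace ℝ (Fin N))), IsOpen Ω →
        ∀ (u ψ : EuclideanSpace ℝ (Fin N) → ℝ),
          (∀ x ∈ Ω, DifferentiableAt ℝ u x) →
          (∀ x ∈ Ω, DifferentiableAt ℝ ψ x) →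
          (∀ x ∈ Ω, 0 < u x) →
          (∀ x ∈ Ω, 0 ≤ ψ x) →
          ∀ x ∈ Ω,
            ‖gradient u x‖ ^ (q - 2) *
                ⟪gradient u x,
                  gradient (fun y => ψ y ^ q / (u y ^ (p - 1) + u y ^ (q - 1))) x⟫ ≤
              ‖gradient ψ x‖ ^ q / ρ₂ ^ (q - 1) := by
  intro N _hN Ω hΩ u ψ hu hψ hupos hψ0 x hx
  have hux : 0 < u x := hupos x hx
  have hψx : 0 ≤ ψ x := hψ0 x hx
  have hU : HasFDerivAt u (fderiv ℝ u x) x := (hu x hx).hasFDerivAt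
  have hΨ : HasFDerivAt ψ (fderiv ℝ ψ x) x := (hψ x hx).hasFDerivAt
  have key1 : ∀ (f : EuclideanSpace ℝ (Fin N) → ℝ)
      (D : EuclideanSpace ℝ (Fin N) →L[ℝ] ℝ), HasFDerivAt f D x →
      ∀ v, ⟪v, gradient f x⟫ = D v := by
    intro f D hf v
    rw [real_inner_comm]
    unfold gradient
    rw [hf.fderiv, InnerProductSpace.toDual_symm_apply]
  have hAx : (0:ℝ) < u x ^ (p - 1) + u x ^ (q - 1) := by positivity
  have hAF : HasFDerivAt (fun y => u y ^ (p - 1) + u y ^ (q - 1))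
      (((p - 1) * u x ^ (p - 1 - 1)) • fderiv ℝ u x
        + ((q - 1) * u x ^ (q - 1 - 1)) • fderiv ℝ u x) x :=
    (hU.rpow_const (Or.inl hux.ne')).add (hU.rpow_const (Or.inl hux.ne'))
  have hNF : HasFDerivAt (fun y => ψ y ^ q) ((q * ψ x ^ (q - 1)) • fderiv ℝ ψ x) x :=
    hΨ.rpow_const (Or.inr hq.le)
  have hinv : HasFDerivAt (fun y => (u y ^ (p - 1) + u y ^ (q - 1))⁻¹)
      ((-(ContinuousLinearMap.mulLeftRight ℝ ℝ
            (u x ^ (p - 1) + u x ^ (q - 1))⁻¹ (u x ^ (p - 1) + u x ^ (q - 1))⁻¹)).comp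
        (((p - 1) * u x ^ (p - 1 - 1)) • fderiv ℝ u x
          + ((q - 1) * u x ^ (q - 1 - 1)) • fderiv ℝ u x)) x :=
    (hasFDerivAt_inv' hAx.ne').comp x hAF
  have hfd : HasFDerivAt (fun y => ψ y ^ q / (u y ^ (p - 1) + u y ^ (q - 1)))
      ((ψ x ^ q) • ((-(ContinuousLinearMap.mulLeftRight ℝ ℝ
            (u x ^ (p - 1) + u x ^ (q - 1))⁻¹ (u x ^ (p - 1) + u x ^ (q - 1))⁻¹)).comp
        (((p - 1) * u x ^ (p - 1 - 1)) • fderiv ℝ u x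
          + ((q - 1) * u x ^ (q - 1 - 1)) • fderiv ℝ u x))
        + (u x ^ (p - 1) + u x ^ (q - 1))⁻¹ • ((q * ψ x ^ (q - 1)) • fderiv ℝ ψ x)) x := by
    have h := hNF.mul hinv
    simpa [div_eq_mul_inv, Pi.mul_def] using h
  set v := gradient u x with hv
  set w := gradient ψ x with hw
  have hUv : fderiv ℝ u x v = ‖v‖ ^ 2 := by
    rw [← key1 u (fderiv ℝ u x) hU v, hv, real_inner_self_eq_norm_sq]
  have hΨv : fderiv ℝ ψ x v = ⟪v, w⟫ := (key1 ψ (fderiv ℝ ψ x) hΨ v).symm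
  have hgoal := key1 _ _ hfd v
  rw [hgoal]
  simp only [ContinuousLinearMap.add_apply, ContinuousLinearMap.smul_apply,
    ContinuousLinearMap.comp_apply, ContinuousLinearMap.neg_apply,
    ContinuousLinearMap.mulLeftRight_apply, smul_eq_mul, hUv, hΨv]
  -- now a pure real-number goal
  have hp2 : p - 1 - 1 = p - 2 := by ring
  have hq2 : q - 1 - 1 = q - 2 := by ring
  rw [hp2, hq2]
  have hI : ⟪v, w⟫ ≤ ‖v‖ * ‖w‖ := real_inner_le_norm v w
  have hI0 : ‖v‖ = 0 → ⟪v, w⟫ = 0 := by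
    intro h
    rw [norm_eq_zero] at h
    rw [h, inner_zero_left]
  have hB : (q - 1) * ρ₂ * (u x ^ (p - 1) + u x ^ (q - 1)) ^ ((q - 2) / (q - 1))
      ≤ (p - 1) * u x ^ (p - 2) + (q - 1) * u x ^ (q - 2) := by
    have hg := hρ₂g (u x) hux
    rw [g] at hg
    have hd : (0:ℝ) < (q - 1) * (u x ^ (q - 1) + u x ^ (p - 1)) ^ ((q - 2) / (q - 1)) := by
      have : (0:ℝ) < q - 1 := by linarith
      positivity
    rw [le_div_iff₀ hd] at hg
    have hcomm : u x ^ (q - 1) + u x ^ (p - 1) = u x ^ (p - 1) + u x ^ (q - 1) := add_comm _ _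
    rw [hcomm] at hg
    nlinarith [hg]
  have hkey := key_aux q ρ₂ hq hρ₂ (u x ^ (p - 1) + u x ^ (q - 1))
    ((p - 1) * u x ^ (p - 2) + (q - 1) * u x ^ (q - 2)) hAx hB
    (ψ x) hψx ‖v‖ ‖w‖ ⟪v, w⟫ (norm_nonneg v) (norm_nonneg w) hI hI0
  calc ‖v‖ ^ (q - 2) *
        (ψ x ^ q * -((u x ^ (p - 1) + u x ^ (q - 1))⁻¹ *
            ((p - 1) * u x ^ (p - 2) * ‖v‖ ^ 2 + (q - 1) * u x ^ (q - 2) * ‖v‖ ^ 2) *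
            (u x ^ (p - 1) + u x ^ (q - 1))⁻¹) +
          (u x ^ (p - 1) + u x ^ (q - 1))⁻¹ * (q * ψ x ^ (q - 1) * ⟪v, w⟫))
      = ‖v‖ ^ (q - 2) *
        ((q * ψ x ^ (q - 1) * ⟪v, w⟫ * (u x ^ (p - 1) + u x ^ (q - 1)) -
            ψ x ^ q * ((p - 1) * u x ^ (p - 2) + (q - 1) * u x ^ (q - 2)) * ‖v‖ ^ (2:ℕ)) /
          (u x ^ (p - 1) + u x ^ (q - 1)) ^ (2:ℕ)) := by
        field_simp
        ring
    _ ≤ ‖w‖ ^ q / ρ₂ ^ (q - 1) := hkey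
end

section
/- Let 1 < q < p be real numbers. Then for every open set Ω ⊆ ℝ^N, every pair of functions u, φ : ℝ^N → ℝ differentiable at every point of Ω with u > 0 and φ ≥ 0 on Ω, and every x ∈ Ω, one has |∇u(x)|^(p-2) · ⟨∇u(x), ∇(φ^q/u^(q-1))(x)⟩ ≤ |∇φ(x)|^q · |∇u(x)|^(p-q). -/
open scoped RealInnerProductSpace

lemma young_aux_s5 {q s t : ℝ} (hq : 1 < q) (hs : 0 ≤ s) (ht : 0 ≤ t) :
    q * t ^ (q - 1) * s ≤ (q - 1) * t ^ q + s ^ q := by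
  have hq0 : (0:ℝ) < q := lt_trans one_pos hq
  have hq1 : (0:ℝ) < q - 1 := sub_pos.mpr hq
  have hconj : Real.HolderConjugate (q / (q - 1)) q :=
    ((Real.holderConjugate_iff_eq_conjExponent hq).mpr rfl).symm
  have h := Real.young_inequality_of_nonneg (Real.rpow_nonneg ht (q - 1)) hs hconj
  have hpow : (t ^ (q - 1)) ^ (q / (q - 1)) = t ^ q := by
    rw [← Real.rpow_mul ht]
    congr 1
    field_simp
  rw [hpow] at h
  have h2 : t ^ (q - 1) * s ≤ (q - 1) / q * t ^ q + s ^ q / q := by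
    have : t ^ q / (q / (q - 1)) = (q - 1) / q * t ^ q := by
      field_simp
    linarith [this ▸ h]
  calc q * t ^ (q - 1) * s = q * (t ^ (q - 1) * s) := by ring
    _ ≤ q * ((q - 1) / q * t ^ q + s ^ q / q) := by
        exact mul_le_mul_of_nonneg_left h2 hq0.le
    _ = (q - 1) * t ^ q + s ^ q := by field_simp

lemma key_aux_s5 (p q : ℝ) (hq : 1 < q) (hqp : q < p) {g h a b : ℝ}
    (hg : 0 < g) (hh : 0 ≤ h) (ha : 0 < a) (hb : 0 ≤ b) {ip : ℝ} (hip : ip ≤ h * g) :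
    g ^ (p - 2) * (a ^ (1 - q) * (q * b ^ (q - 1)) * ip
        + b ^ q * ((1 - q) * a ^ (1 - q - 1)) * g ^ (2:ℕ))
      ≤ h ^ q * g ^ (p - q) := by
  set t : ℝ := b / a with htdef
  have ht : 0 ≤ t := div_nonneg hb ha.le
  have hT : 0 ≤ t * g := mul_nonneg ht hg.le
  -- rewrite coefficients in terms of t
  have hb1 : a ^ (1 - q) * (q * b ^ (q - 1)) = q * t ^ (q - 1) := by
    rw [htdef, Real.div_rpow hb ha.le]
    rw [show (1 - q) = -(q-1) by ring, Real.rpow_neg ha.le]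
    field_simp
  have hb2 : b ^ q * ((1 - q) * a ^ (1 - q - 1)) = -((q - 1) * t ^ q) := by
    rw [htdef, Real.div_rpow hb ha.le]
    rw [show (1 - q - 1) = -q by ring, Real.rpow_neg ha.le]
    field_simp
    ring
  rw [hb1, hb2]
  -- bound ip
  have step1 : g ^ (p - 2) * (q * t ^ (q - 1) * ip + -((q - 1) * t ^ q) * g ^ (2:ℕ))
      ≤ g ^ (p - 2) * (q * t ^ (q - 1) * (h * g) + -((q - 1) * t ^ q) * g ^ (2:ℕ)) := by
    apply mul_le_mul_of_nonneg_left _ (Real.rpow_nonneg hg.le _)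
    have : q * t ^ (q - 1) * ip ≤ q * t ^ (q - 1) * (h * g) :=
      mul_le_mul_of_nonneg_left hip
        (mul_nonneg (by linarith) (Real.rpow_nonneg ht _))
    linarith
  refine step1.trans ?_
  -- rpow algebra
  have e1 : g ^ (p - 2) * g = g ^ (q - 1) * g ^ (p - q) := by
    rw [← Real.rpow_add_one hg.ne' (p - 2), ← Real.rpow_add hg]
    congr 1; ring
  have e2 : g ^ (p - 2) * g ^ (2:ℕ) = g ^ q * g ^ (p - q) := by
    rw [← Real.rpow_natCast g 2, ← Real.rpow_add hg, ← Real.rpow_add hg]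
    congr 1; push_cast; ring
  have key : g ^ (p - 2) * (q * t ^ (q - 1) * (h * g) + -((q - 1) * t ^ q) * g ^ (2:ℕ))
      = (q * (t * g) ^ (q - 1) * h - (q - 1) * (t * g) ^ q) * g ^ (p - q) := by
    rw [Real.mul_rpow ht hg.le, Real.mul_rpow ht hg.le]
    have : g ^ (p - 2) * (q * t ^ (q - 1) * (h * g)) =
        q * (t ^ (q - 1) * g ^ (q - 1)) * h * g ^ (p - q) := by
      calc g ^ (p - 2) * (q * t ^ (q - 1) * (h * g))
          = q * t ^ (q - 1) * h * (g ^ (p - 2) * g) := by ring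
        _ = q * t ^ (q - 1) * h * (g ^ (q - 1) * g ^ (p - q)) := by rw [e1]
        _ = q * (t ^ (q - 1) * g ^ (q - 1)) * h * g ^ (p - q) := by ring
    have h2 : g ^ (p - 2) * (((q - 1) * t ^ q) * g ^ (2:ℕ)) =
        (q - 1) * (t ^ q * g ^ q) * g ^ (p - q) := by
      calc g ^ (p - 2) * (((q - 1) * t ^ q) * g ^ (2:ℕ))
          = (q - 1) * t ^ q * (g ^ (p - 2) * g ^ (2:ℕ)) := by ring
        _ = (q - 1) * t ^ q * (g ^ q * g ^ (p - q)) := by rw [e2]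
        _ = (q - 1) * (t ^ q * g ^ q) * g ^ (p - q) := by ring
    nlinarith [this, h2]
  rw [key]
  apply mul_le_mul_of_nonneg_right _ (Real.rpow_nonneg hg.le _)
  have := young_aux_s5 hq hh hT
  linarith

/-- For `1 < q < p`, differentiable `u > 0`, `φ ≥ 0` on an open set `Ω ⊆ ℝ^N`, and `x ∈ Ω`:
`|∇u|^(p-2)·⟨∇u, ∇(φ^q/u^(q-1))⟩ ≤ |∇φ|^q·|∇u|^(p-q)`. -/
theorem stmt5 (p q : ℝ) (hq : 1 < q) (hqp : q < p) :
    ∀ (N : ℕ), 0 < N →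
      ∀ (Ω : Set (EuclideanSpace ℝ (Fin N))), IsOpen Ω →
        ∀ (u φ : EuclideanSpace ℝ (Fin N) → ℝ),
          (∀ x ∈ Ω, DifferentiableAt ℝ u x) →
          (∀ x ∈ Ω, DifferentiableAt ℝ φ x) →
          (∀ x ∈ Ω, 0 < u x) →
          (∀ x ∈ Ω, 0 ≤ φ x) →
          ∀ x ∈ Ω,
            ‖gradient u x‖ ^ (p - 2) *
                ⟪gradient u x, gradient (fun y => φ y ^ q / u y ^ (q - 1)) x⟫ ≤
              ‖gradient φ x‖ ^ q * ‖gradient u x‖ ^ (p - q) := by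
  intro N hN Ω hΩ u φ hu hφ hupos hφnn x hx
  have hux : 0 < u x := hupos x hx
  have hφx : 0 ≤ φ x := hφnn x hx
  -- the derivative of the auxiliary function
  have hA : HasFDerivAt (fun y => φ y ^ q) ((q * φ x ^ (q - 1)) • fderiv ℝ φ x) x :=
    ((hφ x hx).hasFDerivAt).rpow_const (Or.inr hq.le)
  have hB : HasFDerivAt (fun y => u y ^ (1 - q))
      (((1 - q) * u x ^ (1 - q - 1)) • fderiv ℝ u x) x :=
    ((hu x hx).hasFDerivAt).rpow_const (Or.inl hux.ne')
  have hW : HasFDerivAt (fun y => φ y ^ q * u y ^ (1 - q))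
      ((φ x ^ q) • (((1 - q) * u x ^ (1 - q - 1)) • fderiv ℝ u x)
        + (u x ^ (1 - q)) • ((q * φ x ^ (q - 1)) • fderiv ℝ φ x)) x := hA.mul hB
  -- the two functions agree near x
  have heq : (fun y => φ y ^ q / u y ^ (q - 1))
      =ᶠ[nhds x] (fun y => φ y ^ q * u y ^ (1 - q)) := by
    filter_upwards [hΩ.mem_nhds hx] with y hy
    have huy : 0 < u y := hupos y hy
    rw [show (1 - q) = -(q - 1) by ring, Real.rpow_neg huy.le, div_eq_mul_inv]
  have hV : HasFDerivAt (fun y => φ y ^ q / u y ^ (q - 1))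
      ((φ x ^ q) • (((1 - q) * u x ^ (1 - q - 1)) • fderiv ℝ u x)
        + (u x ^ (1 - q)) • ((q * φ x ^ (q - 1)) • fderiv ℝ φ x)) x :=
    hW.congr_of_eventuallyEq heq
  have hgrad := hV.hasGradientAt.gradient
  rw [hgrad]
  set G := gradient u x with hG
  set H := gradient φ x with hH
  have hinner : ⟪G, (InnerProductSpace.toDual ℝ (EuclideanSpace ℝ (Fin N))).symm
      ((φ x ^ q) • (((1 - q) * u x ^ (1 - q - 1)) • fderiv ℝ u x)
        + (u x ^ (1 - q)) • ((q * φ x ^ (q - 1)) • fderiv ℝ φ x))⟫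
      = u x ^ (1 - q) * (q * φ x ^ (q - 1)) * ⟪H, G⟫
        + φ x ^ q * ((1 - q) * u x ^ (1 - q - 1)) * ‖G‖ ^ (2:ℕ) := by
    rw [real_inner_comm, InnerProductSpace.toDual_symm_apply]
    have gradu : ∀ y, fderiv ℝ u x y = ⟪G, y⟫ := by
      intro y
      rw [hG]
      unfold gradient
      rw [InnerProductSpace.toDual_symm_apply]
    have gradf : ∀ y, fderiv ℝ φ x y = ⟪H, y⟫ := by
      intro y
      rw [hH]
      unfold gradient
      rw [InnerProductSpace.toDual_symm_apply]
    have hu' : fderiv ℝ u x G = ‖G‖ ^ (2:ℕ) := by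
      rw [gradu G, real_inner_self_eq_norm_sq]
    have hφ' : fderiv ℝ φ x G = ⟪H, G⟫ := gradf G
    simp only [ContinuousLinearMap.add_apply, ContinuousLinearMap.smul_apply, smul_eq_mul]
    rw [hu', hφ']
    ring
  rw [hinner]
  rcases eq_or_ne G 0 with hG0 | hG0
  · rw [hG0]
    simp only [inner_zero_right, norm_zero, mul_zero, zero_mul]
    rw [Real.zero_rpow (by linarith : p - q ≠ 0)]
    norm_num
  · have hgpos : 0 < ‖G‖ := norm_pos_iff.mpr hG0
    have hip : ⟪H, G⟫ ≤ ‖H‖ * ‖G‖ := real_inner_le_norm H G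
    exact key_aux_s5 p q hq hqp hgpos (norm_nonneg H) hux hφx hip
end

section
/- Let q > 1 be a real number. Then for every open set Ω ⊆ ℝ^N, every pair of functions u, φ : ℝ^N → ℝ differentiable at every point of Ω with u > 0 and φ ≥ 0 on Ω, and every x ∈ Ω, one has the Picone-type inequality |∇u(x)|^(q-2) · ⟨∇u(x), ∇(φ^q/u^(q-1))(x)⟩ ≤ |∇φ(x)|^q. -/
open scoped RealInnerProductSpace

private lemma key_picone {E : Type*} [NormedAddCommGroup E] [InnerProductSpace ℝ E]
    (q : ℝ) (hq : 1 < q) (a b : E) (t : ℝ) (ht : 0 ≤ t) :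
    (t ^ q * (1 - q)) * ‖a‖ ^ (q - 2) * ⟪a, a⟫ + (t ^ (q - 1) * q) * ‖a‖ ^ (q - 2) * ⟪a, b⟫
      ≤ ‖b‖ ^ q := by
  rcases eq_or_ne a 0 with rfl | ha
  · simp only [inner_zero_left, inner_zero_right, mul_zero, zero_add, add_zero]
    positivity
  · have hna : 0 < ‖a‖ := norm_pos_iff.mpr ha
    set s := t * ‖a‖ with hs
    have hs0 : 0 ≤ s := mul_nonneg ht hna.le
    -- rpow facts
    have e1 : ‖a‖ ^ (q - 2) * ⟪a, a⟫ = ‖a‖ ^ q := by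
      rw [real_inner_self_eq_norm_sq, ← Real.rpow_natCast ‖a‖ 2, ← Real.rpow_add hna]
      norm_num
    have e2 : ‖a‖ ^ (q - 2) * ‖a‖ = ‖a‖ ^ (q - 1) := by
      nth_rewrite 2 [← Real.rpow_one ‖a‖]
      rw [← Real.rpow_add hna]; ring_nf
    have hsq : s ^ q = t ^ q * ‖a‖ ^ q := Real.mul_rpow ht hna.le
    have hsq1 : s ^ (q - 1) = t ^ (q - 1) * ‖a‖ ^ (q - 1) := Real.mul_rpow ht hna.le
    have hCS : ⟪a, b⟫ ≤ ‖a‖ * ‖b‖ := real_inner_le_norm a b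
    have hc : 0 ≤ t ^ (q - 1) * q := by positivity
    have step1 : (t ^ (q - 1) * q) * ‖a‖ ^ (q - 2) * ⟪a, b⟫
        ≤ q * s ^ (q - 1) * ‖b‖ := by
      calc (t ^ (q - 1) * q) * ‖a‖ ^ (q - 2) * ⟪a, b⟫
          ≤ (t ^ (q - 1) * q) * ‖a‖ ^ (q - 2) * (‖a‖ * ‖b‖) := by
            apply mul_le_mul_of_nonneg_left hCS
            positivity
        _ = q * s ^ (q - 1) * ‖b‖ := by rw [hsq1, ← e2]; ring
    -- Young's inequality
    have hpq : (q / (q - 1)).HolderConjugate q := (Real.HolderConjugate.conjExponent hq).symm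
    have hy := Real.young_inequality_of_nonneg (Real.rpow_nonneg hs0 (q - 1)) (norm_nonneg b) hpq
    have hpow : (s ^ (q - 1)) ^ (q / (q - 1)) = s ^ q := by
      rw [← Real.rpow_mul hs0]
      congr 1
      rw [mul_comm]
      exact div_mul_cancel₀ q (sub_ne_zero.mpr hq.ne')
    rw [hpow] at hy
    have ediv : s ^ q / (q / (q - 1)) = s ^ q * (q - 1) / q := by
      rw [div_div_eq_mul_div]
    rw [ediv] at hy
    have hq0 : (0:ℝ) < q := by linarith
    have hy2 : q * (s ^ (q - 1) * ‖b‖) ≤ s ^ q * (q - 1) + ‖b‖ ^ q := by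
      calc q * (s ^ (q - 1) * ‖b‖) ≤ q * (s ^ q * (q - 1) / q + ‖b‖ ^ q / q) := by
            exact mul_le_mul_of_nonneg_left hy hq0.le
        _ = s ^ q * (q - 1) + ‖b‖ ^ q := by field_simp
    have efin : (t ^ q * (1 - q)) * ‖a‖ ^ (q - 2) * ⟪a, a⟫ = (1 - q) * s ^ q := by
      rw [mul_assoc, e1, hsq]; ring
    calc (t ^ q * (1 - q)) * ‖a‖ ^ (q - 2) * ⟪a, a⟫
          + (t ^ (q - 1) * q) * ‖a‖ ^ (q - 2) * ⟪a, b⟫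
        ≤ (1 - q) * s ^ q + q * s ^ (q - 1) * ‖b‖ := by rw [efin]; linarith [step1]
      _ ≤ ‖b‖ ^ q := by nlinarith [hy2]

/-- Picone inequality: for `q > 1`, differentiable `u > 0`, `φ ≥ 0` on an open set
`Ω ⊆ ℝ^N`, and `x ∈ Ω`: `|∇u|^(q-2)·⟨∇u, ∇(φ^q/u^(q-1))⟩ ≤ |∇φ|^q`. -/
theorem stmt6 (q : ℝ) (hq : 1 < q) :
    ∀ (N : ℕ), 0 < N →
      ∀ (Ω : Set (EuclideanSpace ℝ (Fin N))), IsOpen Ω →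
        ∀ (u φ : EuclideanSpace ℝ (Fin N) → ℝ),
          (∀ x ∈ Ω, DifferentiableAt ℝ u x) →
          (∀ x ∈ Ω, DifferentiableAt ℝ φ x) →
          (∀ x ∈ Ω, 0 < u x) →
          (∀ x ∈ Ω, 0 ≤ φ x) →
          ∀ x ∈ Ω,
            ‖gradient u x‖ ^ (q - 2) *
                ⟪gradient u x, gradient (fun y => φ y ^ q / u y ^ (q - 1)) x⟫ ≤
              ‖gradient φ x‖ ^ q := by
  intro N hN Ω hΩ u φ hu hφ hupos hφnn x hx
  have hux : 0 < u x := hupos x hx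
  have hφx : 0 ≤ φ x := hφnn x hx
  set a := gradient u x with hadef
  set b := gradient φ x with hbdef
  have hA : HasFDerivAt u (InnerProductSpace.toDual ℝ (EuclideanSpace ℝ (Fin N)) a) x :=
    hasGradientAt_iff_hasFDerivAt.mp (hu x hx).hasGradientAt
  have hB : HasFDerivAt φ (InnerProductSpace.toDual ℝ (EuclideanSpace ℝ (Fin N)) b) x :=
    hasGradientAt_iff_hasFDerivAt.mp (hφ x hx).hasGradientAt
  have h1 : HasFDerivAt (fun y => φ y ^ q)
      ((q * φ x ^ (q - 1)) • InnerProductSpace.toDual ℝ (EuclideanSpace ℝ (Fin N)) b) x :=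
    hB.rpow_const (Or.inr hq.le)
  have h2 : HasFDerivAt (fun y => u y ^ (1 - q))
      (((1 - q) * u x ^ (1 - q - 1)) • InnerProductSpace.toDual ℝ (EuclideanSpace ℝ (Fin N)) a) x :=
    hA.rpow_const (Or.inl hux.ne')
  have hg := h1.mul h2
  have hev : (fun y => φ y ^ q / u y ^ (q - 1)) =ᶠ[nhds x]
      (fun y => φ y ^ q * u y ^ (1 - q)) := by
    have hpos : ∀ᶠ y in nhds x, 0 < u y :=
      (hu x hx).continuousAt.eventually (eventually_gt_nhds hux)
    filter_upwards [hpos] with y hy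
    rw [div_eq_mul_inv, show (1 - q) = -(q - 1) by ring, Real.rpow_neg hy.le]
  have hf := (hg.congr_of_eventuallyEq hev)
  have hgrad : gradient (fun y => φ y ^ q / u y ^ (q - 1)) x =
      (φ x ^ q * ((1 - q) * u x ^ (1 - q - 1))) • a
        + (u x ^ (1 - q) * (q * φ x ^ (q - 1))) • b := by
    have := (hasFDerivAt_iff_hasGradientAt.mp hf).gradient
    rw [this]
    simp [map_add, map_smul, smul_smul]
  rw [hgrad, inner_add_right, real_inner_smul_right, real_inner_smul_right]
  set t := φ x / u x with htdef
  have ht : 0 ≤ t := div_nonneg hφx hux.le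
  have ec1 : φ x ^ q * ((1 - q) * u x ^ (1 - q - 1)) = t ^ q * (1 - q) := by
    rw [htdef, Real.div_rpow hφx hux.le, show (1 - q - 1) = -q by ring,
      Real.rpow_neg hux.le, div_eq_mul_inv]
    ring
  have ec2 : u x ^ (1 - q) * (q * φ x ^ (q - 1)) = t ^ (q - 1) * q := by
    rw [htdef, Real.div_rpow hφx hux.le, show (1 - q) = -(q - 1) by ring,
      Real.rpow_neg hux.le, div_eq_mul_inv]
    ring
  rw [ec1, ec2]
  have := key_picone q hq a b t ht
  ring_nf
  ring_nf at this
  linarith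
end

section
/- Let 1 < q < p be real numbers, let E be a real inner product space, let X, Y ∈ E, and let c ≥ 0 be a real number. Then q·‖X‖^(p-2)·⟨X,Y⟩·c^(q-1) − (q-1)·‖X‖^p·c^q ≤ ‖Y‖^q·‖X‖^(p-q). -/
open scoped RealInnerProductSpace

/-- For `1 < q < p`, vectors `X, Y` in a real inner product space and `c ≥ 0`:
`q·‖X‖^(p-2)·⟨X,Y⟩·c^(q-1) − (q-1)·‖X‖^p·c^q ≤ ‖Y‖^q·‖X‖^(p-q)`. -/
theorem stmt7 {E : Type*} [NormedAddCommGroup E] [InnerProductSpace ℝ E]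
    (p q : ℝ) (hq : 1 < q) (hqp : q < p) (X Y : E) (c : ℝ) (hc : 0 ≤ c) :
    q * ‖X‖ ^ (p - 2) * ⟪X, Y⟫ * c ^ (q - 1) - (q - 1) * ‖X‖ ^ p * c ^ q ≤
      ‖Y‖ ^ q * ‖X‖ ^ (p - q) := by
  by_cases hX : X = 0
  · subst hX
    simp [inner_zero_left, Real.zero_rpow (by nlinarith : p ≠ 0),
      Real.zero_rpow (by nlinarith : p - q ≠ 0)]
  have ha : (0:ℝ) < ‖X‖ := norm_pos_iff.2 hX
  set a := ‖X‖
  set b := ‖Y‖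
  have hb : (0:ℝ) ≤ b := norm_nonneg Y
  have hq0 : (0:ℝ) < q := by linarith
  have hq1 : (0:ℝ) < q - 1 := by linarith
  -- step 1: bound the inner product
  have h1 : q * a ^ (p - 2) * ⟪X, Y⟫ * c ^ (q - 1) ≤
      q * (a ^ (p - 1) * b * c ^ (q - 1)) := by
    have hip : ⟪X, Y⟫ ≤ a * b := real_inner_le_norm X Y
    have hcoef : (0:ℝ) ≤ q * a ^ (p - 2) * c ^ (q - 1) :=
      mul_nonneg (mul_nonneg hq0.le (Real.rpow_nonneg ha.le _)) (Real.rpow_nonneg hc _)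
    calc q * a ^ (p - 2) * ⟪X, Y⟫ * c ^ (q - 1)
        = (q * a ^ (p - 2) * c ^ (q - 1)) * ⟪X, Y⟫ := by ring
      _ ≤ (q * a ^ (p - 2) * c ^ (q - 1)) * (a * b) := by
          exact mul_le_mul_of_nonneg_left hip hcoef
      _ = q * (a ^ (p - 2) * a ^ (1:ℝ) * b * c ^ (q - 1)) := by
          rw [Real.rpow_one]; ring
      _ = q * (a ^ (p - 1) * b * c ^ (q - 1)) := by
          rw [← Real.rpow_add ha]; ring_nf
  -- step 2: Young's inequality
  have hconj : q.HolderConjugate (q / (q - 1)) := Real.HolderConjugate.conjExponent hq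
  set q' := q / (q - 1) with hq'
  have hyoung := Real.young_inequality_of_nonneg
    (a := b * a ^ ((p - q) / q)) (b := a ^ (p / q') * c ^ (q - 1))
    (mul_nonneg hb (Real.rpow_nonneg ha.le _))
    (mul_nonneg (Real.rpow_nonneg ha.le _) (Real.rpow_nonneg hc _)) hconj
  have e1 : (b * a ^ ((p - q) / q)) ^ q = b ^ q * a ^ (p - q) := by
    rw [Real.mul_rpow hb (Real.rpow_nonneg ha.le _), ← Real.rpow_mul ha.le,
      div_mul_cancel₀ _ (ne_of_gt hq0)]
  have hq'pos : (0:ℝ) < q' := div_pos hq0 hq1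
  have hq'pos : (0:ℝ) < q' := div_pos hq0 hq1
  have e2 : (a ^ (p / q') * c ^ (q - 1)) ^ q' = a ^ p * c ^ q := by
    rw [Real.mul_rpow (Real.rpow_nonneg ha.le _) (Real.rpow_nonneg hc _),
      ← Real.rpow_mul ha.le, ← Real.rpow_mul hc, div_mul_cancel₀ _ (ne_of_gt hq'pos)]
    congr 2
    rw [hq']
    field_simp
  have e3 : (b * a ^ ((p - q) / q)) * (a ^ (p / q') * c ^ (q - 1)) =
      a ^ (p - 1) * b * c ^ (q - 1) := by
    have h4 : a ^ ((p - q) / q) * a ^ (p / q') = a ^ (p - 1) := by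
      rw [← Real.rpow_add ha]
      congr 1
      rw [hq']
      field_simp
      ring
    calc (b * a ^ ((p - q) / q)) * (a ^ (p / q') * c ^ (q - 1))
        = (a ^ ((p - q) / q) * a ^ (p / q')) * b * c ^ (q - 1) := by ring
      _ = a ^ (p - 1) * b * c ^ (q - 1) := by rw [h4]
  rw [e1, e2, e3] at hyoung
  have key : q * (a ^ (p - 1) * b * c ^ (q - 1)) ≤
      b ^ q * a ^ (p - q) + (q - 1) * (a ^ p * c ^ q) := by
    have h5 := mul_le_mul_of_nonneg_left hyoung hq0.le
    calc q * (a ^ (p - 1) * b * c ^ (q - 1))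
        ≤ q * (b ^ q * a ^ (p - q) / q + a ^ p * c ^ q / q') := h5
      _ = b ^ q * a ^ (p - q) + (q - 1) * (a ^ p * c ^ q) := by
          rw [hq']; field_simp
  linarith [h1]
end

section
/- Let p > 1 be a real number, let E be a real inner product space, let X, Y ∈ E, and let c ≥ 0 be a real number. Then p·‖X‖^(p-2)·⟨X,Y⟩·c^(p-1) − (p-1)·‖X‖^p·c^p ≤ ‖Y‖^p. -/
open scoped RealInnerProductSpace

lemma key_young {p : ℝ} (hp : 1 < p) {a b : ℝ} (ha : 0 ≤ a) (hb : 0 ≤ b) :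
    p * a ^ (p - 1) * b - (p - 1) * a ^ p ≤ b ^ p := by
  have hp0 : 0 < p := lt_trans one_pos hp
  have hp1 : 0 < p - 1 := by linarith
  have hq : (p / (p - 1)).HolderConjugate p :=
    ((Real.holderConjugate_iff_eq_conjExponent hp).mpr rfl).symm
  have hy := Real.young_inequality_of_nonneg (Real.rpow_nonneg ha (p - 1)) hb hq
  have h1 : (a ^ (p - 1)) ^ (p / (p - 1)) = a ^ p := by
    rw [← Real.rpow_mul ha]
    congr 1
    field_simp
  rw [h1] at hy
  have h2 : a ^ (p - 1) * b ≤ a ^ p * ((p - 1) / p) + b ^ p / p := by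
    calc a ^ (p - 1) * b ≤ a ^ p / (p / (p - 1)) + b ^ p / p := hy
      _ = a ^ p * ((p - 1) / p) + b ^ p / p := by rw [div_div_eq_mul_div]; ring
  have h3 := mul_le_mul_of_nonneg_left h2 hp0.le
  have h4 : p * (a ^ p * ((p - 1) / p) + b ^ p / p) = (p - 1) * a ^ p + b ^ p := by
    field_simp
  linarith

/-- For `p > 1`, vectors `X, Y` in a real inner product space and `c ≥ 0`:
`p·‖X‖^(p-2)·⟨X,Y⟩·c^(p-1) − (p-1)·‖X‖^p·c^p ≤ ‖Y‖^p`. -/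
theorem stmt8 {E : Type*} [NormedAddCommGroup E] [InnerProductSpace ℝ E]
    (p : ℝ) (hp : 1 < p) (X Y : E) (c : ℝ) (hc : 0 ≤ c) :
    p * ‖X‖ ^ (p - 2) * ⟪X, Y⟫ * c ^ (p - 1) - (p - 1) * ‖X‖ ^ p * c ^ p ≤
      ‖Y‖ ^ p := by
  have hp0 : 0 < p := lt_trans one_pos hp
  set a : ℝ := ‖X‖ * c with ha
  have hXn : (0:ℝ) ≤ ‖X‖ := norm_nonneg X
  have hkey := key_young hp (mul_nonneg hXn hc) (norm_nonneg Y)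
  have hmul : a ^ (p - 1) = ‖X‖ ^ (p - 1) * c ^ (p - 1) :=
    Real.mul_rpow hXn hc
  have hmulp : a ^ p = ‖X‖ ^ p * c ^ p := Real.mul_rpow hXn hc
  have hXp : ‖X‖ ^ (p - 2) * ‖X‖ = ‖X‖ ^ (p - 1) := by
    rcases eq_or_lt_of_le hXn with h | h
    · rw [← h, mul_zero, Real.zero_rpow (by linarith : p - 1 ≠ 0)]
    · rw [show p - 1 = (p - 2) + 1 by ring, Real.rpow_add h, Real.rpow_one]
  have hinner : ⟪X, Y⟫ ≤ ‖X‖ * ‖Y‖ := real_inner_le_norm X Y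
  have h1 : p * ‖X‖ ^ (p - 2) * ⟪X, Y⟫ * c ^ (p - 1) ≤ p * a ^ (p - 1) * ‖Y‖ := by
    rw [hmul]
    have hn2 : (0:ℝ) ≤ ‖X‖ ^ (p - 2) := Real.rpow_nonneg hXn _
    have hcp : (0:ℝ) ≤ c ^ (p - 1) := Real.rpow_nonneg hc _
    calc p * ‖X‖ ^ (p - 2) * ⟪X, Y⟫ * c ^ (p - 1)
        ≤ p * ‖X‖ ^ (p - 2) * (‖X‖ * ‖Y‖) * c ^ (p - 1) := by
          apply mul_le_mul_of_nonneg_right _ hcp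
          apply mul_le_mul_of_nonneg_left hinner (by positivity)
      _ = p * (‖X‖ ^ (p - 2) * ‖X‖) * ‖Y‖ * c ^ (p - 1) := by ring
      _ = p * (‖X‖ ^ (p - 1) * c ^ (p - 1)) * ‖Y‖ := by rw [hXp]; ring
  rw [hmulp] at hkey
  linarith
end
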